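/- arXiv:2212.05681 — 2 statements merged into one kernel-verified Lean document; each statement's English description precedes it below -/
import Mathlib

section
/- Let s, t ∈ ℝ with s ≥ t ≥ 0 and s > n/2. Then for all u, v : ℤⁿ → ℂ with ‖u‖_{H^s} := (∑_k (1+|k|²)^s|u(k)|²)^{1/2} < ∞ and ‖v‖_{H^t} < ∞, the convolution (u * v)(k) = ∑_{l∈ℤⁿ} u(l) v(k−l) is well defined and satisfies ‖u * v‖_{H^t} ≤ C · ‖u‖_{H^s} · ‖v‖_{H^t} for a constant C depending only on n, s, t. -/
open scoped ENNReal NNReal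
open MeasureTheory


lemma ecs' {α : Type*} [Countable α] (f g : α → ℝ≥0∞) :
    (∑' a, f a * g a) ^ 2 ≤ (∑' a, f a ^ 2) * (∑' a, g a ^ 2) := by
  letI : MeasurableSpace α := ⊤
  haveI : MeasurableSingletonClass α := ⟨fun _ => trivial⟩
  have hpq : (2:ℝ).HolderConjugate 2 := Real.HolderConjugate.two_two
  have h := ENNReal.lintegral_mul_le_Lp_mul_Lq Measure.count hpq
    (f := f) (g := g) (measurable_of_countable f).aemeasurable
    (measurable_of_countable g).aemeasurable
  rw [lintegral_count, lintegral_count, lintegral_count] at h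
  have e1 : ∀ h₀ : α → ℝ≥0∞, (∑' a, h₀ a ^ (2:ℝ)) = ∑' a, h₀ a ^ 2 := by
    intro h₀; apply tsum_congr; intro a; rw [← ENNReal.rpow_natCast (h₀ a) 2]; norm_num
  rw [e1 f, e1 g] at h
  calc (∑' a, f a * g a) ^ 2
      ≤ ((∑' a, f a ^ 2) ^ (1/(2:ℝ)) * (∑' a, g a ^ 2) ^ (1/(2:ℝ))) ^ 2 :=
        pow_le_pow_left' h 2
    _ = (∑' a, f a ^ 2) * (∑' a, g a ^ 2) := by
        rw [mul_pow, ← ENNReal.rpow_natCast (_ ^ (1/(2:ℝ))) 2,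
          ← ENNReal.rpow_natCast (_ ^ (1/(2:ℝ))) 2, ← ENNReal.rpow_mul, ← ENNReal.rpow_mul]
        norm_num


lemma econv' {α : Type*} [AddCommGroup α] [Countable α] (c g : α → ℝ≥0∞) :
    ∑' k, (∑' l, c l * g (k - l)) ^ 2 ≤ 2 * (∑' l, c l) ^ 2 * (∑' m, g m ^ 2) := by
  have key : ∀ k : α, (∑' l, c l * g (k - l)) ^ 2
      = ∑' l, ∑' m, (c l * c m) * (g (k - l) * g (k - m)) := by
    intro k
    rw [sq, ← ENNReal.tsum_mul_right]
    apply tsum_congr; intro l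
    rw [← ENNReal.tsum_mul_left]
    apply tsum_congr; intro m
    ring
  calc ∑' k, (∑' l, c l * g (k - l)) ^ 2
      = ∑' k, ∑' l, ∑' m, (c l * c m) * (g (k - l) * g (k - m)) := tsum_congr key
    _ = ∑' l, ∑' m, ∑' k, (c l * c m) * (g (k - l) * g (k - m)) := by
        rw [ENNReal.tsum_comm (f := fun k l => ∑' m, (c l * c m) * (g (k - l) * g (k - m)))]
        apply tsum_congr; intro l
        exact ENNReal.tsum_comm
    _ ≤ ∑' l, ∑' m, (c l * c m) * (2 * ∑' x, g x ^ 2) := by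
        apply ENNReal.tsum_le_tsum; intro l
        apply ENNReal.tsum_le_tsum; intro m
        rw [ENNReal.tsum_mul_left]
        apply mul_le_mul_right
        calc ∑' k, g (k - l) * g (k - m)
            ≤ ∑' k, (g (k - l) ^ 2 + g (k - m) ^ 2) := by
              apply ENNReal.tsum_le_tsum; intro k
              calc g (k - l) * g (k - m)
                  ≤ max (g (k-l)) (g (k-m)) * max (g (k-l)) (g (k-m)) :=
                    mul_le_mul' (le_max_left _ _) (le_max_right _ _)
                _ ≤ g (k - l) ^ 2 + g (k - m) ^ 2 := by
                    rcases max_cases (g (k-l)) (g (k-m)) with ⟨h1, _⟩ | ⟨h1, _⟩ <;>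
                      rw [h1, ← sq] <;> [exact le_add_right le_rfl; exact le_add_left le_rfl]
          _ = (∑' k, g (k - l) ^ 2) + ∑' k, g (k - m) ^ 2 := ENNReal.tsum_add
          _ = 2 * ∑' x, g x ^ 2 := by
              have hshift : ∀ a : α, (∑' k, g (k - a) ^ 2) = ∑' x, g x ^ 2 := fun a => by
                simpa using (Equiv.subRight a).tsum_eq (fun x => g x ^ 2)
              rw [hshift l, hshift m, two_mul]
    _ = 2 * (∑' l, c l) ^ 2 * (∑' m, g m ^ 2) := by
        have h1 : ∀ l, (∑' m, (c l * c m) * (2 * ∑' x, g x ^ 2))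
            = c l * (2 * ∑' x, g x ^ 2) * ∑' m, c m := by
          intro l
          rw [← ENNReal.tsum_mul_left (a := c l * (2 * ∑' x, g x ^ 2))]
          apply tsum_congr; intro m; ring
        rw [tsum_congr h1, ENNReal.tsum_mul_right, ENNReal.tsum_mul_right]
        ring


lemma sum1 {r : ℝ} (hr : 1/2 < r) : Summable fun m : ℤ => (1 + (m:ℝ)^2) ^ (-r) := by
  have h2r : 1 < 2*r := by linarith
  have hS : Summable fun m : ℤ => |(m:ℝ)| ^ (-(2*r)) + if m = 0 then (1:ℝ) else 0 :=
    (Real.summable_abs_int_rpow h2r).add ((hasSum_ite_eq (0:ℤ) (1:ℝ)).summable)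
  apply Summable.of_nonneg_of_le (fun m => Real.rpow_nonneg (by positivity) _) _ hS
  intro m
  rcases eq_or_ne m 0 with rfl | hm
  · simp [Real.zero_rpow (by intro h; nlinarith : -(2*r) ≠ 0)]
  · have hm1 : (1:ℝ) ≤ (m:ℝ)^2 := by
      have : (1:ℝ) ≤ |(m:ℝ)| := by
        rw [← Int.cast_abs]; exact_mod_cast Int.one_le_abs hm
      nlinarith [sq_abs (m:ℝ)]
    have h1 : (1 + (m:ℝ)^2) ^ (-r) ≤ ((m:ℝ)^2) ^ (-r) := by
      apply Real.rpow_le_rpow_of_nonpos (by positivity) (by linarith) (by linarith)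
    have h2 : ((m:ℝ)^2) ^ (-r) = |(m:ℝ)| ^ (-(2*r)) := by
      rw [← sq_abs, ← Real.rpow_natCast |(m:ℝ)| 2, ← Real.rpow_mul (abs_nonneg _)]
      norm_num
    simp only [hm, if_false, add_zero]
    linarith [h1, h2.le, h2.ge]

lemma sumpi {g : ℤ → ℝ} (hg0 : ∀ m, 0 ≤ g m) (hg : Summable g) (n : ℕ) :
    Summable fun k : Fin n → ℤ => ∏ j, g (k j) := by
  induction n with
  | zero => exact .of_finite
  | succ m ih =>
    have hprod : Summable fun p : ℤ × (Fin m → ℤ) => g p.1 * ∏ j, g (p.2 j) :=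
      Summable.mul_of_nonneg (f := g) (g := fun q : Fin m → ℤ => ∏ j, g (q j))
        hg ih hg0 (fun k => Finset.prod_nonneg fun j _ => hg0 _)
    have h2 := (Fin.consEquiv (fun _ : Fin (m+1) => ℤ)).symm.summable_iff.mpr hprod
    apply h2.congr
    intro k
    simp [Fin.prod_univ_succ, Fin.tail]

lemma sumw (n : ℕ) {s : ℝ} (hs : (n:ℝ)/2 < s) :
    Summable fun k : Fin n → ℤ => (1 + ∑ j, ((k j : ℝ)) ^ 2) ^ (-s) := by
  rcases Nat.eq_zero_or_pos n with rfl | hn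
  · exact .of_finite
  have hn' : (0:ℝ) < n := by exact_mod_cast hn
  have hr : 1/2 < s/n := by rw [div_lt_div_iff₀ (by norm_num) hn']; nlinarith
  have hS := sumpi (g := fun m : ℤ => (1 + (m:ℝ)^2) ^ (-(s/n)))
    (fun m => Real.rpow_nonneg (by positivity) _) (sum1 hr) n
  apply Summable.of_nonneg_of_le (fun k => Real.rpow_nonneg (by positivity) _) _ hS
  intro k
  have h1 : ∀ j : Fin n, (0:ℝ) < 1 + (k j:ℝ)^2 := fun j => by positivity
  have hW : (0:ℝ) < 1 + ∑ j, (k j:ℝ)^2 := by positivity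
  have hle : ∏ j, (1 + (k j:ℝ)^2) ≤ (1 + ∑ j, (k j:ℝ)^2) ^ (n:ℕ) := by
    calc ∏ j, (1 + (k j:ℝ)^2) ≤ ∏ _j : Fin n, (1 + ∑ i, (k i:ℝ)^2) := by
          apply Finset.prod_le_prod (fun j _ => (h1 j).le)
          intro j _
          have : (k j:ℝ)^2 ≤ ∑ i, (k i:ℝ)^2 :=
            Finset.single_le_sum (fun i _ => sq_nonneg ((k i:ℝ))) (Finset.mem_univ j)
          linarith
      _ = (1 + ∑ i, (k i:ℝ)^2) ^ (n:ℕ) := by simp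
  calc (1 + ∑ j, (k j:ℝ)^2) ^ (-s)
      = ((1 + ∑ j, (k j:ℝ)^2) ^ (n:ℕ)) ^ (-(s/n)) := by
        rw [← Real.rpow_natCast _ n, ← Real.rpow_mul hW.le]
        congr 1; field_simp
    _ ≤ (∏ j, (1 + (k j:ℝ)^2)) ^ (-(s/n)) := by
        apply Real.rpow_le_rpow_of_nonpos (Finset.prod_pos fun j _ => h1 j) hle
        have : 0 < s := by nlinarith
        have : 0 < s/n := by positivity
        linarith
    _ = ∏ j, (1 + (k j:ℝ)^2) ^ (-(s/n)) := by
        rw [← Real.finset_prod_rpow _ _ (fun j _ => (h1 j).le)]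


lemma keyr {s t : ℝ} (hts : t ≤ s) (ht : 0 ≤ t) {P Q R x y : ℝ}
    (hP : 1 ≤ P) (hQ : 1 ≤ Q) (hR : 1 ≤ R) (hPQR : P ≤ 2*(Q+R)) (hx : 0 ≤ x) (hy : 0 ≤ y) :
    P^(t/2) * (x*y) ≤ 2^t *
      ( (Q^(s/2)*x) * (R^(-(s/2)) * (R^(t/2)*y)) + (Q^(-(s/2)) * (Q^(s/2)*x)) * (R^(t/2)*y) ) := by
  have hQ0 : (0:ℝ) < Q := by linarith
  have hR0 : (0:ℝ) < R := by linarith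
  have hP0 : (0:ℝ) < P := by linarith
  have h4 : ∀ {A : ℝ}, 1 ≤ A → P ≤ 4*A → P^(t/2) ≤ 2^t * A^(t/2) := by
    intro A hA hPA
    have hA0 : (0:ℝ) < A := by linarith
    calc P^(t/2) ≤ (4*A)^(t/2) :=
          Real.rpow_le_rpow hP0.le hPA (by linarith)
      _ = 2^t * A^(t/2) := by
          rw [show (4:ℝ)*A = 2*(2*A) by ring, Real.mul_rpow (by norm_num) (by positivity),
            Real.mul_rpow (by norm_num) hA0.le, ← mul_assoc, ← Real.rpow_add (by norm_num)]
          ring_nf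
  -- rewrite RHS pieces
  have hterm1 : (Q^(s/2)*x) * (R^(-(s/2)) * (R^(t/2)*y)) = Q^(s/2) * R^((t-s)/2) * (x*y) := by
    rw [show R^(-(s/2)) * (R^(t/2)*y) = (R^(-(s/2)) * R^(t/2)) * y by ring,
      ← Real.rpow_add hR0]
    ring_nf
  have hterm2 : (Q^(-(s/2)) * (Q^(s/2)*x)) * (R^(t/2)*y) = R^(t/2) * (x*y) := by
    rw [show Q^(-(s/2)) * (Q^(s/2)*x) = (Q^(-(s/2)) * Q^(s/2)) * x by ring,
      ← Real.rpow_add hQ0]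
    simp
    ring
  rw [hterm1, hterm2]
  have hxy : 0 ≤ x*y := mul_nonneg hx hy
  rcases le_total R Q with hc | hc
  · -- R ≤ Q
    have h1 : P^(t/2) ≤ 2^t * Q^(t/2) := h4 hQ (by linarith)
    have h2 : Q^(t/2) ≤ Q^(s/2) * R^((t-s)/2) := by
      have : Q^(t/2) = Q^(s/2) * Q^((t-s)/2) := by
        rw [← Real.rpow_add hQ0]; ring_nf
      rw [this]
      apply mul_le_mul_of_nonneg_left _ (Real.rpow_nonneg hQ0.le _)
      exact Real.rpow_le_rpow_of_nonpos hR0 hc (by linarith)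
    have h3 : 0 ≤ 2^t * (R^(t/2) * (x*y)) := by positivity
    calc P^(t/2) * (x*y) ≤ (2^t * (Q^(s/2) * R^((t-s)/2))) * (x*y) := by
          apply mul_le_mul_of_nonneg_right _ hxy
          calc P^(t/2) ≤ 2^t * Q^(t/2) := h1
            _ ≤ 2^t * (Q^(s/2) * R^((t-s)/2)) :=
              mul_le_mul_of_nonneg_left h2 (by positivity)
      _ ≤ 2^t * (Q^(s/2) * R^((t-s)/2) * (x*y) + R^(t/2) * (x*y)) := by
          nlinarith [mul_nonneg (Real.rpow_nonneg hR0.le (t/2)) hxy,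
            Real.rpow_nonneg (show (0:ℝ) ≤ 2 by norm_num) t]
  · -- Q ≤ R
    have h1 : P^(t/2) ≤ 2^t * R^(t/2) := h4 hR (by linarith)
    have h2 : 0 ≤ Q^(s/2) * R^((t-s)/2) * (x*y) := by positivity
    calc P^(t/2) * (x*y) ≤ (2^t * R^(t/2)) * (x*y) :=
          mul_le_mul_of_nonneg_right h1 hxy
      _ ≤ 2^t * (Q^(s/2) * R^((t-s)/2) * (x*y) + R^(t/2) * (x*y)) := by
          nlinarith [Real.rpow_nonneg (show (0:ℝ) ≤ 2 by norm_num) t]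


noncomputable def Wt (n : ℕ) (k : Fin n → ℤ) : ℝ := 1 + ∑ j, ((k j : ℝ)) ^ 2

lemma Wt_one_le (n : ℕ) (k : Fin n → ℤ) : 1 ≤ Wt n k := by
  have : 0 ≤ ∑ j, ((k j : ℝ))^2 := Finset.sum_nonneg fun j _ => sq_nonneg _
  unfold Wt; linarith

lemma Wt_pos (n : ℕ) (k : Fin n → ℤ) : 0 < Wt n k := lt_of_lt_of_le one_pos (Wt_one_le n k)

lemma Wt_sub (n : ℕ) (k l : Fin n → ℤ) : Wt n k ≤ 2 * (Wt n l + Wt n (k - l)) := by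
  unfold Wt
  have h : ∀ j, ((k j : ℝ))^2 ≤ 2*(((l j : ℝ))^2 + (((k - l) j : ℝ))^2) := by
    intro j
    have he : (((k - l) j : ℝ)) = (k j : ℝ) - (l j : ℝ) := by
      simp [Pi.sub_apply]
    rw [he]
    nlinarith [sq_nonneg ((l j:ℝ) - ((k j:ℝ) - (l j:ℝ)))]
  have hsum : ∑ j, ((k j:ℝ))^2 ≤ ∑ j, 2*(((l j:ℝ))^2 + (((k - l) j:ℝ))^2) :=
    Finset.sum_le_sum fun j _ => h j
  have hexp : ∑ j, 2*(((l j:ℝ))^2 + (((k - l) j:ℝ))^2)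
      = 2*(∑ j, ((l j:ℝ))^2) + 2*(∑ j, (((k - l) j:ℝ))^2) := by
    rw [Finset.mul_sum, Finset.mul_sum, ← Finset.sum_add_distrib]
    apply Finset.sum_congr rfl; intro j _; ring
  linarith

lemma rpow_half_sq {x : ℝ} (hx : 0 ≤ x) (a : ℝ) : (x ^ (a/2)) ^ 2 = x ^ a := by
  rw [← Real.rpow_natCast (x ^ (a/2)) 2, ← Real.rpow_mul hx]
  congr 1
  push_cast; ring

lemma esq' (x y : ℝ≥0∞) : (x + y) ^ 2 ≤ 4 * (x ^ 2 + y ^ 2) := by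
  have h1 : x + y ≤ 2 * max x y := by
    rw [two_mul]; exact add_le_add (le_max_left _ _) (le_max_right _ _)
  calc (x + y)^2 ≤ (2 * max x y)^2 := pow_le_pow_left' h1 2
    _ = 4 * (max x y)^2 := by ring
    _ ≤ 4 * (x^2 + y^2) := by
        apply mul_le_mul_right
        rcases max_cases x y with ⟨h, _⟩ | ⟨h, _⟩ <;> rw [h] <;>
          [exact le_add_right le_rfl; exact le_add_left le_rfl]


theorem stmt13 (n : ℕ) (s t : ℝ) (hts : t ≤ s) (ht : 0 ≤ t) (hs : (n : ℝ) / 2 < s) :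
    ∃ C : ℝ, 0 < C ∧ ∀ u v : (Fin n → ℤ) → ℂ,
      Summable (fun k : Fin n → ℤ => (1 + ∑ j, ((k j : ℝ)) ^ 2) ^ s * ‖u k‖ ^ 2) →
      Summable (fun k : Fin n → ℤ => (1 + ∑ j, ((k j : ℝ)) ^ 2) ^ t * ‖v k‖ ^ 2) →
      (∀ k : Fin n → ℤ, Summable fun l : Fin n → ℤ => ‖u l * v (k - l)‖) ∧
      Summable (fun k : Fin n → ℤ =>
        (1 + ∑ j, ((k j : ℝ)) ^ 2) ^ t * ‖∑' l : Fin n → ℤ, u l * v (k - l)‖ ^ 2) ∧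
      Real.sqrt (∑' k : Fin n → ℤ,
          (1 + ∑ j, ((k j : ℝ)) ^ 2) ^ t * ‖∑' l : Fin n → ℤ, u l * v (k - l)‖ ^ 2) ≤
        C * Real.sqrt (∑' k : Fin n → ℤ, (1 + ∑ j, ((k j : ℝ)) ^ 2) ^ s * ‖u k‖ ^ 2) *
          Real.sqrt (∑' k : Fin n → ℤ, (1 + ∑ j, ((k j : ℝ)) ^ 2) ^ t * ‖v k‖ ^ 2) := by
  have hWrw : ∀ k : Fin n → ℤ, (1 + ∑ j, ((k j : ℝ)) ^ 2) = Wt n k := fun _ => rfl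
  have ht2 : (0:ℝ) < 2 := by norm_num
  -- the constant
  set Hr : ℝ := ∑' m : Fin n → ℤ, Wt n m ^ (-s) with hHr_def
  have hHsum : Summable fun m : Fin n → ℤ => Wt n m ^ (-s) := sumw n hs
  have hHr1 : (1:ℝ) ≤ Hr := by
    have h0 : Wt n (0 : Fin n → ℤ) ^ (-s) = 1 := by
      have : Wt n (0 : Fin n → ℤ) = 1 := by simp [Wt]
      rw [this, Real.one_rpow]
    calc (1:ℝ) = Wt n (0 : Fin n → ℤ) ^ (-s) := h0.symm
      _ ≤ Hr := hHsum.le_tsum 0 fun m _ => Real.rpow_nonneg (Wt_pos n m).le _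
  have hKpos : (0:ℝ) < 2 ^ (2*t+4) * Hr :=
    mul_pos (Real.rpow_pos_of_pos ht2 _) (lt_of_lt_of_le one_pos hHr1)
  refine ⟨Real.sqrt (2 ^ (2*t+4) * Hr), Real.sqrt_pos.mpr hKpos, ?_⟩
  intro u v hu hv
  simp only [hWrw] at hu hv ⊢
  set Ar : ℝ := ∑' k : Fin n → ℤ, Wt n k ^ s * ‖u k‖ ^ 2 with hAr_def
  set Br : ℝ := ∑' k : Fin n → ℤ, Wt n k ^ t * ‖v k‖ ^ 2 with hBr_def
  have hAr0 : 0 ≤ Ar := tsum_nonneg fun k =>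
    mul_nonneg (Real.rpow_nonneg (Wt_pos n k).le _) (sq_nonneg _)
  have hBr0 : 0 ≤ Br := tsum_nonneg fun k =>
    mul_nonneg (Real.rpow_nonneg (Wt_pos n k).le _) (sq_nonneg _)
  -- ENNReal-valued players
  set U : (Fin n → ℤ) → ℝ≥0∞ := fun l => ENNReal.ofReal ‖u l‖ with hU_def
  set V : (Fin n → ℤ) → ℝ≥0∞ := fun m => ENNReal.ofReal ‖v m‖ with hV_def
  set α : (Fin n → ℤ) → ℝ≥0∞ := fun l => ENNReal.ofReal (Wt n l ^ (s/2) * ‖u l‖) with hα_def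
  set γ : (Fin n → ℤ) → ℝ≥0∞ := fun m => ENNReal.ofReal (Wt n m ^ (t/2) * ‖v m‖) with hγ_def
  set η : (Fin n → ℤ) → ℝ≥0∞ := fun m => ENNReal.ofReal (Wt n m ^ (-(s/2))) with hη_def
  set Wk : (Fin n → ℤ) → ℝ≥0∞ := fun k => ENNReal.ofReal (Wt n k ^ (t/2)) with hWk_def
  set E2t : ℝ≥0∞ := ENNReal.ofReal (2 ^ t) with hE2t_def
  set A : ℝ≥0∞ := ∑' l, α l ^ 2 with hA_def
  set B : ℝ≥0∞ := ∑' m, γ m ^ 2 with hB_def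
  set H : ℝ≥0∞ := ∑' m, η m ^ 2 with hH_def
  have hA : A = ENNReal.ofReal Ar := by
    rw [hAr_def, ENNReal.ofReal_tsum_of_nonneg
      (fun k => mul_nonneg (Real.rpow_nonneg (Wt_pos n k).le _) (sq_nonneg _)) hu]
    apply tsum_congr; intro l
    rw [hα_def, ← ENNReal.ofReal_pow (mul_nonneg (Real.rpow_nonneg (Wt_pos n l).le _)
      (norm_nonneg _)), mul_pow, rpow_half_sq (Wt_pos n l).le]
  have hB : B = ENNReal.ofReal Br := by
    rw [hBr_def, ENNReal.ofReal_tsum_of_nonneg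
      (fun k => mul_nonneg (Real.rpow_nonneg (Wt_pos n k).le _) (sq_nonneg _)) hv]
    apply tsum_congr; intro m
    rw [hγ_def, ← ENNReal.ofReal_pow (mul_nonneg (Real.rpow_nonneg (Wt_pos n m).le _)
      (norm_nonneg _)), mul_pow, rpow_half_sq (Wt_pos n m).le]
  have hH : H = ENNReal.ofReal Hr := by
    rw [hHr_def, ENNReal.ofReal_tsum_of_nonneg
      (fun m => Real.rpow_nonneg (Wt_pos n m).le _) hHsum]
    apply tsum_congr; intro m
    rw [hη_def, ← ENNReal.ofReal_pow (Real.rpow_nonneg (Wt_pos n m).le _)]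
    congr 1
    rw [show (-(s/2)) = (-s)/2 by ring, rpow_half_sq (Wt_pos n m).le]
  -- master pointwise bound
  have master : ∀ k l : Fin n → ℤ, Wk k * (U l * V (k - l)) ≤
      E2t * (α l * (η (k - l) * γ (k - l)) + (η l * α l) * γ (k - l)) := by
    intro k l
    have hWq := (Wt_pos n l).le
    have hWr := (Wt_pos n (k - l)).le
    have h1 : Wk k * (U l * V (k - l))
        = ENNReal.ofReal (Wt n k ^ (t/2) * (‖u l‖ * ‖v (k - l)‖)) := by
      rw [hWk_def, hU_def, hV_def, ← ENNReal.ofReal_mul (norm_nonneg _),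
        ← ENNReal.ofReal_mul (Real.rpow_nonneg (Wt_pos n k).le _)]
    have h2 : E2t * (α l * (η (k - l) * γ (k - l)) + (η l * α l) * γ (k - l))
        = ENNReal.ofReal ((2:ℝ)^t *
          ( (Wt n l ^ (s/2) * ‖u l‖) * (Wt n (k-l) ^ (-(s/2)) * (Wt n (k-l) ^ (t/2) * ‖v (k-l)‖))
          + (Wt n l ^ (-(s/2)) * (Wt n l ^ (s/2) * ‖u l‖)) * (Wt n (k-l) ^ (t/2) * ‖v (k-l)‖))) := by
      rw [hα_def, hγ_def, hη_def, hE2t_def]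
      rw [← ENNReal.ofReal_mul (Real.rpow_nonneg hWr _),
        ← ENNReal.ofReal_mul (Real.rpow_nonneg hWq _),
        ← ENNReal.ofReal_mul (mul_nonneg (Real.rpow_nonneg hWq _) (norm_nonneg _)),
        ← ENNReal.ofReal_mul (mul_nonneg (Real.rpow_nonneg hWq _)
           (mul_nonneg (Real.rpow_nonneg hWq _) (norm_nonneg _))),
        ← ENNReal.ofReal_add, ← ENNReal.ofReal_mul (by positivity)]
      · positivity
      · positivity
    rw [h1, h2]
    exact ENNReal.ofReal_le_ofReal (keyr hts ht (Wt_one_le n k) (Wt_one_le n l)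
      (Wt_one_le n (k-l)) (Wt_sub n k l) (norm_nonneg _) (norm_nonneg _))
  set S : (Fin n → ℤ) → ℝ≥0∞ := fun k => ∑' l, U l * V (k - l) with hS_def
  set X : (Fin n → ℤ) → ℝ≥0∞ := fun k => ∑' l, (η l * γ l) * α (k - l) with hX_def
  set Y : (Fin n → ℤ) → ℝ≥0∞ := fun k => ∑' l, (η l * α l) * γ (k - l) with hY_def
  have step1 : ∀ k, Wk k * S k ≤ E2t * (X k + Y k) := by
    intro k
    have hXr : (∑' l, α l * (η (k - l) * γ (k - l))) = X k := by
      have h := (Equiv.subLeft k).tsum_eq (fun m => (η m * γ m) * α (k - m))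
      simp only [Equiv.subLeft_apply, sub_sub_cancel] at h
      calc (∑' l, α l * (η (k - l) * γ (k - l)))
          = ∑' l, (η (k - l) * γ (k - l)) * α l := by
            apply tsum_congr; intro l; ring
        _ = ∑' m, (η m * γ m) * α (k - m) := h
        _ = X k := rfl
    calc Wk k * S k = ∑' l, Wk k * (U l * V (k - l)) := by
          rw [hS_def, ENNReal.tsum_mul_left]
      _ ≤ ∑' l, E2t * (α l * (η (k - l) * γ (k - l)) + (η l * α l) * γ (k - l)) :=
          ENNReal.tsum_le_tsum fun l => master k l
      _ = E2t * ((∑' l, α l * (η (k - l) * γ (k - l))) + ∑' l, (η l * α l) * γ (k - l)) := by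
          rw [ENNReal.tsum_mul_left, ENNReal.tsum_add]
      _ = E2t * (X k + Y k) := by rw [hXr, hY_def]
  have hXsum : ∑' k, X k ^ 2 ≤ 2 * (∑' l, η l * γ l) ^ 2 * A :=
    econv' (fun l => η l * γ l) α
  have hYsum : ∑' k, Y k ^ 2 ≤ 2 * (∑' l, η l * α l) ^ 2 * B :=
    econv' (fun l => η l * α l) γ
  have hCS1 : (∑' l, η l * γ l) ^ 2 ≤ H * B := ecs' η γ
  have hCS2 : (∑' l, η l * α l) ^ 2 ≤ H * A := ecs' η α
  set E : ℝ≥0∞ := ∑' k, (Wk k * S k) ^ 2 with hE_def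
  have hE16 : E ≤ 16 * E2t ^ 2 * (H * (A * B)) := by
    calc E ≤ ∑' k, (E2t * (X k + Y k)) ^ 2 :=
          ENNReal.tsum_le_tsum fun k => pow_le_pow_left' (step1 k) 2
      _ = ∑' k, E2t ^ 2 * (X k + Y k) ^ 2 := by
          apply tsum_congr; intro k; ring
      _ ≤ ∑' k, E2t ^ 2 * (4 * (X k ^ 2 + Y k ^ 2)) :=
          ENNReal.tsum_le_tsum fun k => mul_le_mul_right (esq' (X k) (Y k)) _
      _ = E2t ^ 2 * 4 * ((∑' k, X k ^ 2) + ∑' k, Y k ^ 2) := by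
          have hptw : ∀ k : Fin n → ℤ, E2t ^ 2 * (4 * (X k ^ 2 + Y k ^ 2))
              = (E2t ^ 2 * 4) * X k ^ 2 + (E2t ^ 2 * 4) * Y k ^ 2 := fun k => by ring
          rw [tsum_congr hptw, ENNReal.tsum_add, ENNReal.tsum_mul_left,
            ENNReal.tsum_mul_left]
          ring
      _ ≤ E2t ^ 2 * 4 * ((2 * (H * B) * A) + 2 * (H * A) * B) := by
          apply mul_le_mul_right
          exact add_le_add (hXsum.trans (mul_le_mul_left (mul_le_mul_right hCS1 2) A))
            (hYsum.trans (mul_le_mul_left (mul_le_mul_right hCS2 2) B))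
      _ = 16 * E2t ^ 2 * (H * (A * B)) := by ring
  have hr2 : (2:ℝ) ^ (2*t+4) = 16 * ((2:ℝ)^t)^2 := by
    have h1 : (2:ℝ)^(2*t+4) = (2:ℝ)^(2*t) * (2:ℝ)^(4:ℝ) := Real.rpow_add ht2 _ _
    have h2 : (2:ℝ)^(4:ℝ) = 16 := by
      rw [show (4:ℝ) = ((4:ℕ):ℝ) by norm_num, Real.rpow_natCast]; norm_num
    have h3 : (2:ℝ)^(2*t) = ((2:ℝ)^t)^2 := by
      rw [two_mul, Real.rpow_add ht2, sq]
    rw [h1, h2, h3]; ring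
  set Mr : ℝ := 2 ^ (2*t+4) * Hr * (Ar * Br) with hMr_def
  have hMr0 : 0 ≤ Mr := by positivity
  have hHr0 : (0:ℝ) ≤ Hr := le_trans zero_le_one hHr1
  have hEM : E ≤ ENNReal.ofReal Mr := by
    refine hE16.trans ?_
    rw [hA, hB, hH, hE2t_def]
    rw [← ENNReal.ofReal_pow (by positivity : (0:ℝ) ≤ (2:ℝ)^t),
      ← ENNReal.ofReal_mul hAr0, ← ENNReal.ofReal_mul hHr0,
      show (16:ℝ≥0∞) = ENNReal.ofReal 16 by rw [ENNReal.ofReal_ofNat],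
      ← ENNReal.ofReal_mul (by norm_num : (0:ℝ) ≤ 16),
      ← ENNReal.ofReal_mul (by positivity : (0:ℝ) ≤ 16*((2:ℝ)^t)^2)]
    apply ENNReal.ofReal_le_ofReal
    apply le_of_eq
    rw [hMr_def, hr2]; ring
  have hMne : (ENNReal.ofReal Mr) ≠ ⊤ := ENNReal.ofReal_ne_top
  have hSfin : ∀ k, S k ≠ ⊤ := by
    intro k hk
    have hWk0 : Wk k ≠ 0 := by
      simp only [hWk_def]
      exact (ENNReal.ofReal_pos.mpr (Real.rpow_pos_of_pos (Wt_pos n k) _)).ne'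
    have htop : (Wk k * S k) ^ 2 = ⊤ := by
      rw [hk, ENNReal.mul_top hWk0]
      simp
    have h1 : (⊤:ℝ≥0∞) ≤ E := by
      rw [← htop, hE_def]
      exact ENNReal.le_tsum k
    exact hMne (top_le_iff.mp (h1.trans hEM))
  have claim1 : ∀ k, Summable fun l => ‖u l * v (k - l)‖ := by
    intro k
    have h1 : S k = ∑' l, ((‖u l * v (k - l)‖₊ : ℝ≥0) : ℝ≥0∞) := by
      apply tsum_congr; intro l
      simp only [hU_def, hV_def]
      rw [← ENNReal.ofReal_mul (norm_nonneg _), ← norm_mul, ← coe_nnnorm, ENNReal.ofReal_coe_nnreal]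
    have h2 : Summable fun l => ‖u l * v (k - l)‖₊ :=
      ENNReal.tsum_coe_ne_top_iff_summable.mp (h1 ▸ hSfin k)
    simpa using NNReal.summable_coe.mpr h2
  have hconvle : ∀ k, ENNReal.ofReal ‖∑' l, u l * v (k - l)‖ ≤ S k := by
    intro k
    calc ENNReal.ofReal ‖∑' l, u l * v (k - l)‖
        ≤ ENNReal.ofReal (∑' l, ‖u l * v (k - l)‖) :=
          ENNReal.ofReal_le_ofReal (norm_tsum_le_tsum_norm (claim1 k))
      _ = ∑' l, ENNReal.ofReal ‖u l * v (k - l)‖ :=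
          ENNReal.ofReal_tsum_of_nonneg (fun l => norm_nonneg _) (claim1 k)
      _ = S k := by
          apply tsum_congr; intro l
          simp only [hU_def, hV_def]
          rw [norm_mul, ENNReal.ofReal_mul (norm_nonneg _)]
  set F : (Fin n → ℤ) → ℝ := fun k => Wt n k ^ t * ‖∑' l, u l * v (k - l)‖ ^ 2 with hF_def
  have hF0 : ∀ k, 0 ≤ F k := fun k =>
    mul_nonneg (Real.rpow_nonneg (Wt_pos n k).le _) (sq_nonneg _)
  have hofF : ∀ k, ENNReal.ofReal (F k) ≤ (Wk k * S k) ^ 2 := by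
    intro k
    have h1 : F k = (Wt n k ^ (t/2) * ‖∑' l, u l * v (k - l)‖) ^ 2 := by
      simp only [hF_def]
      rw [mul_pow, rpow_half_sq (Wt_pos n k).le]
    calc ENNReal.ofReal (F k)
        = (Wk k * ENNReal.ofReal ‖∑' l, u l * v (k - l)‖) ^ 2 := by
          rw [h1, ENNReal.ofReal_pow (mul_nonneg (Real.rpow_nonneg (Wt_pos n k).le _)
            (norm_nonneg _)), ENNReal.ofReal_mul (Real.rpow_nonneg (Wt_pos n k).le _), hWk_def]
      _ ≤ (Wk k * S k) ^ 2 := pow_le_pow_left' (mul_le_mul_right (hconvle k) _) 2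
  have hsumE : ∑' k, ENNReal.ofReal (F k) ≤ ENNReal.ofReal Mr :=
    le_trans (le_trans (ENNReal.tsum_le_tsum hofF) le_rfl) hEM
  have claim2 : Summable F := by
    have hne : (∑' k, ENNReal.ofReal (F k)) ≠ ⊤ := ne_top_of_le_ne_top hMne hsumE
    apply (ENNReal.summable_toReal hne).congr
    intro k
    rw [ENNReal.toReal_ofReal (hF0 k)]
  have hPle : (∑' k, F k) ≤ Mr := by
    rw [← ENNReal.ofReal_le_ofReal_iff hMr0,
      ENNReal.ofReal_tsum_of_nonneg hF0 claim2]
    exact hsumE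
  refine ⟨claim1, claim2, ?_⟩
  calc Real.sqrt (∑' k, F k) ≤ Real.sqrt Mr := Real.sqrt_le_sqrt hPle
    _ = Real.sqrt (2 ^ (2*t+4) * Hr) * Real.sqrt Ar * Real.sqrt Br := by
        rw [hMr_def, Real.sqrt_mul hKpos.le (Ar * Br), Real.sqrt_mul hAr0, ← mul_assoc]
end

section
/- Let s, t ∈ ℝ, and let S (resp. T) be the weighted ℓ²(ℤⁿ) space with weight (1+|k|²)^s (resp. (1+|k|²)^t). Suppose u : ℤⁿ → ℂ is such that convolution with u maps S boundedly to T with operator bound C, i.e. ‖u * f‖_{H^t} ≤ C‖f‖_{H^s} for all finitely supported f. Then convolution with u also maps the weighted ℓ² space with weight (1+|k|²)^{-t} boundedly into the one with weight (1+|k|²)^{-s} with the same bound C. -/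
theorem stmt15 (n : ℕ) (s t : ℝ) (u : (Fin n → ℤ) → ℂ) (C : ℝ) (hC : 0 ≤ C)
    (h : ∀ f : (Fin n → ℤ) → ℂ, (Function.support f).Finite →
      ∑' k : Fin n → ℤ, ENNReal.ofReal
          ((1 + ∑ j, ((k j : ℝ)) ^ 2) ^ t * ‖∑' l : Fin n → ℤ, u l * f (k - l)‖ ^ 2) ≤
        ENNReal.ofReal (C ^ 2) *
          ∑' k : Fin n → ℤ, ENNReal.ofReal
            ((1 + ∑ j, ((k j : ℝ)) ^ 2) ^ s * ‖f k‖ ^ 2)) :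
    ∀ g : (Fin n → ℤ) → ℂ, (Function.support g).Finite →
      ∑' k : Fin n → ℤ, ENNReal.ofReal
          ((1 + ∑ j, ((k j : ℝ)) ^ 2) ^ (-s) * ‖∑' l : Fin n → ℤ, u l * g (k - l)‖ ^ 2) ≤
        ENNReal.ofReal (C ^ 2) *
          ∑' k : Fin n → ℤ, ENNReal.ofReal
            ((1 + ∑ j, ((k j : ℝ)) ^ 2) ^ (-t) * ‖g k‖ ^ 2) := by
  classical
  intro g hg
  set B : (Fin n → ℤ) → ℝ := fun k => 1 + ∑ j, ((k j : ℝ)) ^ 2 with hBdef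
  have hBpos : ∀ k, 0 < B k := by
    intro k
    have : (0:ℝ) ≤ ∑ j, ((k j : ℝ))^2 := Finset.sum_nonneg fun j _ => sq_nonneg _
    simp only [hBdef]; linarith
  have hBneg : ∀ k, B (-k) = B k := by
    intro k; simp [hBdef]
  have hBrpos : ∀ (r : ℝ) k, 0 < B k ^ r := fun r k => Real.rpow_pos_of_pos (hBpos k) r
  have hBmul : ∀ (r r' : ℝ) k, B k ^ r * B k ^ r' = B k ^ (r + r') :=
    fun r r' k => (Real.rpow_add (hBpos k) r r').symm
  set cg : (Fin n → ℤ) → ℂ := fun k => ∑' l, u l * g (k - l) with hcgdef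
  set Sg : Finset (Fin n → ℤ) := hg.toFinset with hSgdef
  have hSgmem : ∀ k, k ∈ Sg ↔ g k ≠ 0 := by
    intro k; simp [hSgdef, Function.mem_support]
  -- general convolution formula
  have conv_eq : ∀ (φ : (Fin n → ℤ) → ℂ) (F : Finset (Fin n → ℤ)),
      (∀ x, φ x ≠ 0 → x ∈ F) → ∀ k : Fin n → ℤ,
      (∑' l, u l * φ (k - l)) = ∑ m ∈ F, u (k - m) * φ m := by
    intro φ F hF k
    rw [tsum_eq_sum (s := F.image (fun m => k - m))
      (by
        intro l hl
        by_cases hz : φ (k - l) = 0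
        · simp [hz]
        · exact absurd (Finset.mem_image.mpr ⟨k - l, hF _ hz, by abel⟩) hl)]
    rw [Finset.sum_image (by intro a _ b _ hab; exact sub_right_injective hab)]
    apply Finset.sum_congr rfl
    intro m _
    rw [sub_sub_cancel]
  -- Gr
  set Gr : ℝ := ∑ k ∈ Sg, B k ^ (-t) * ‖g k‖^2 with hGrdef
  have hGr0 : 0 ≤ Gr :=
    Finset.sum_nonneg fun k _ => mul_nonneg (hBrpos _ _).le (by positivity)
  have hG : (∑' k, ENNReal.ofReal (B k ^ (-t) * ‖g k‖ ^ 2)) = ENNReal.ofReal Gr := by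
    rw [tsum_eq_sum (s := Sg) (by
      intro k hk
      have : g k = 0 := by by_contra hne; exact hk ((hSgmem k).mpr hne)
      simp [this])]
    rw [← ENNReal.ofReal_sum_of_nonneg
      (fun i _ => mul_nonneg (hBrpos _ _).le (by positivity))]
  -- main real estimate
  have main : ∀ A : Finset (Fin n → ℤ),
      (∑ k ∈ A, B k ^ (-s) * ‖cg k‖^2) ≤ C^2 * Gr := by
    intro A
    set SA : ℝ := ∑ k ∈ A, B k ^ (-s) * ‖cg k‖^2 with hSAdef
    have hSA0 : 0 ≤ SA :=
      Finset.sum_nonneg fun k _ => mul_nonneg (hBrpos _ _).le (by positivity)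
    set f : (Fin n → ℤ) → ℂ :=
      fun k => if k ∈ A then ((B k ^ (-s) : ℝ) : ℂ) * (starRingEnd ℂ) (cg k) else 0
      with hfdef
    set f' : (Fin n → ℤ) → ℂ := fun k => f (-k) with hf'def
    have hf'supp : ∀ x, f' x ≠ 0 → x ∈ A.image (fun k => -k) := by
      intro x hx
      by_cases hmem : -x ∈ A
      · exact Finset.mem_image.mpr ⟨-x, hmem, by simp⟩
      · exfalso; apply hx; simp only [hf'def, hfdef, if_neg hmem]
    have hf'fin : (Function.support f').Finite := by
      apply Set.Finite.subset (Finset.finite_toSet (A.image (fun k => -k)))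
      intro x hx
      exact hf'supp x hx
    set cg' : (Fin n → ℤ) → ℂ := fun k => ∑' l, u l * f' (k - l) with hcg'def
    -- hypothesis restated
    have h' : (∑' k, ENNReal.ofReal (B k ^ t * ‖cg' k‖ ^ 2)) ≤
        ENNReal.ofReal (C ^ 2) * ∑' k, ENNReal.ofReal (B k ^ s * ‖f' k‖ ^ 2) := h f' hf'fin
    -- compute RHS of h'
    have hfA : ∀ k ∈ A, ‖f k‖ = B k ^ (-s) * ‖cg k‖ := by
      intro k hk
      simp only [hfdef, if_pos hk, norm_mul, RingHomIsometric.norm_map, Complex.norm_real,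
        Real.norm_eq_abs, abs_of_pos (hBrpos _ _)]
    have hRHS : (∑' k, ENNReal.ofReal (B k ^ s * ‖f' k‖ ^ 2)) = ENNReal.ofReal SA := by
      rw [tsum_eq_sum (s := A.image (fun k => -k)) (by
        intro k hk
        have : f' k = 0 := by by_contra hne; exact hk (hf'supp k hne)
        simp [this])]
      rw [Finset.sum_image (by intro a _ b _ hab; exact neg_injective hab)]
      rw [← ENNReal.ofReal_sum_of_nonneg
        (fun i _ => mul_nonneg (hBrpos _ _).le (by positivity))]
      congr 1
      apply Finset.sum_congr rfl
      intro k hk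
      have hf'k : f' (-k) = f k := by simp [hf'def]
      rw [hBneg, hf'k, hfA k hk]
      rw [mul_pow, sq (B k ^ (-s)), ← mul_assoc, ← mul_assoc, hBmul, hBmul]
      have he : s + -s + -s = -s := by ring
      rw [he]
    -- h' now reads: LHS_E ≤ ofReal (C^2 * SA)
    rw [hRHS, ← ENNReal.ofReal_mul (by positivity)] at h'
    -- convolution formulas
    have hcgk : ∀ k, cg k = ∑ m ∈ Sg, u (k - m) * g m := by
      intro k
      exact conv_eq g Sg (fun x hx => (hSgmem x).mpr hx) k
    have hcg' : ∀ m : Fin n → ℤ, cg' (-m) = ∑ k ∈ A, u (k - m) * f k := by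
      intro m
      have h0 : cg' (-m) = ∑ x ∈ A.image (fun k => -k), u (-m - x) * f' x :=
        conv_eq f' (A.image (fun k => -k)) hf'supp (-m)
      rw [h0]
      rw [Finset.sum_image (by intro a _ b _ hab; exact neg_injective hab)]
      apply Finset.sum_congr rfl
      intro k _
      have h1 : f' (-k) = f k := by simp [hf'def]
      rw [h1]
      congr 2
      abel
    -- key identity
    have mul_conj_norm : ∀ z : ℂ, z * (starRingEnd ℂ) z = ((‖z‖^2 : ℝ) : ℂ) := by
      intro z
      rw [Complex.mul_conj]
      norm_cast
      rw [Complex.sq_norm]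
    have hkey : ((SA : ℝ) : ℂ) = ∑ m ∈ Sg, g m * cg' (-m) := by
      have step1 : ((SA : ℝ) : ℂ) = ∑ k ∈ A, cg k * f k := by
        rw [hSAdef]
        push_cast
        apply Finset.sum_congr rfl
        intro k hk
        simp only [hfdef, if_pos hk]
        rw [← mul_assoc, mul_comm (cg k) _, mul_assoc, mul_conj_norm]
        push_cast
        ring
      rw [step1]
      have step2 : ∀ k ∈ A, cg k * f k = ∑ m ∈ Sg, g m * (u (k - m) * f k) := by
        intro k _
        rw [hcgk k, Finset.sum_mul]
        apply Finset.sum_congr rfl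
        intro m _
        ring
      rw [Finset.sum_congr rfl step2, Finset.sum_comm]
      apply Finset.sum_congr rfl
      intro m _
      rw [hcg' m, Finset.mul_sum]
    -- norm bound
    have hSAle : SA ≤ ∑ m ∈ Sg, ‖g m‖ * ‖cg' (-m)‖ := by
      calc SA = ‖((SA : ℝ) : ℂ)‖ := by
            rw [Complex.norm_real, Real.norm_eq_abs, abs_of_nonneg hSA0]
        _ = ‖∑ m ∈ Sg, g m * cg' (-m)‖ := by rw [hkey]
        _ ≤ ∑ m ∈ Sg, ‖g m * cg' (-m)‖ := norm_sum_le _ _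
        _ = ∑ m ∈ Sg, ‖g m‖ * ‖cg' (-m)‖ := by simp [norm_mul]
    -- Cauchy-Schwarz
    have hCS := Finset.sum_mul_sq_le_sq_mul_sq Sg
      (fun m => B m ^ (-t/2) * ‖g m‖) (fun m => B m ^ (t/2) * ‖cg' (-m)‖)
    have hprod : ∀ m ∈ Sg,
        (B m ^ (-t/2) * ‖g m‖) * (B m ^ (t/2) * ‖cg' (-m)‖) = ‖g m‖ * ‖cg' (-m)‖ := by
      intro m _
      rw [mul_mul_mul_comm, hBmul]
      have he : -t/2 + t/2 = 0 := by ring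
      rw [he, Real.rpow_zero, one_mul]
    have hsq1 : ∀ m ∈ Sg, (B m ^ (-t/2) * ‖g m‖)^2 = B m ^ (-t) * ‖g m‖^2 := by
      intro m _
      rw [mul_pow, sq (B m ^ (-t/2)), hBmul]
      have he : -t/2 + -t/2 = -t := by ring
      rw [he]
    have hsq2 : ∀ m ∈ Sg, (B m ^ (t/2) * ‖cg' (-m)‖)^2 = B m ^ t * ‖cg' (-m)‖^2 := by
      intro m _
      rw [mul_pow, sq (B m ^ (t/2)), hBmul]
      have he : t/2 + t/2 = t := by ring
      rw [he]
    rw [Finset.sum_congr rfl hprod, Finset.sum_congr rfl hsq1,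
      Finset.sum_congr rfl hsq2] at hCS
    -- bound T'
    set T' : ℝ := ∑ m ∈ Sg, B m ^ t * ‖cg' (-m)‖^2 with hT'def
    have hT'0 : 0 ≤ T' :=
      Finset.sum_nonneg fun k _ => mul_nonneg (hBrpos _ _).le (by positivity)
    have hT'le : T' ≤ C^2 * SA := by
      have h1 : ENNReal.ofReal T' ≤ ENNReal.ofReal (C^2 * SA) := by
        refine le_trans ?_ h'
        rw [hT'def]
        have h2 : (∑ m ∈ Sg, B m ^ t * ‖cg' (-m)‖^2)
            = ∑ k ∈ Sg.image (fun m => -m), B k ^ t * ‖cg' k‖^2 := by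
          rw [Finset.sum_image (by intro a _ b _ hab; exact neg_injective hab)]
          apply Finset.sum_congr rfl
          intro m _
          rw [hBneg]
        rw [h2, ENNReal.ofReal_sum_of_nonneg
          (fun i _ => mul_nonneg (hBrpos _ _).le (by positivity))]
        exact ENNReal.sum_le_tsum _
      exact (ENNReal.ofReal_le_ofReal_iff (by positivity)).mp h1
    -- conclude
    rcases eq_or_lt_of_le hSA0 with hz | hpos
    · rw [← hz]; positivity
    · have hGrT : (∑ m ∈ Sg, B m ^ (-t) * ‖g m‖^2) = Gr := rfl
      rw [hGrT] at hCS
      nlinarith [mul_le_mul_of_nonneg_left hT'le hGr0]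
  -- assemble
  have goal2 : (∑' k, ENNReal.ofReal (B k ^ (-s) * ‖cg k‖ ^ 2)) ≤
      ENNReal.ofReal (C ^ 2) * ∑' k, ENNReal.ofReal (B k ^ (-t) * ‖g k‖ ^ 2) := by
    rw [hG, ← ENNReal.ofReal_mul (by positivity)]
    rw [ENNReal.tsum_eq_iSup_sum]
    apply iSup_le
    intro A
    rw [← ENNReal.ofReal_sum_of_nonneg
      (fun i _ => mul_nonneg (hBrpos _ _).le (by positivity))]
    exact ENNReal.ofReal_le_ofReal (main A)
  exact goal2
end
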